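/- Fix $m \le \binom{n}{2}$ and let $G'$ be a uniformly random $d$-regular graph on $[n]$ (assume one exists). Conditional on $G'$, let $H$ be obtained by keeping a uniformly random subset of $m$ edges of $G'$ (assume $G'$ has at least $m$ edges, i.e., $m \le dn/2$). Let $\bar{H} = K_n - H$, let $\mathbf{t}$ be the vector of degree deficiencies $t_i = d - \deg_H(i)$, and conditional on $H$ let $\bar{H}_{\mathbf{t}}$ be a uniformly random $\mathbf{t}$-factor of $\bar{H}$. Then $H \cup \bar{H}_{\mathbf{t}}$ is a uniformly random $d$-regular graph on $[n]$. -/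

import Mathlib

open MeasureTheory ProbabilityTheory ENNReal

/-- The edge type of the complete graph on `[n]`. -/
abbrev EdgeType (n : ℕ) := {e : Sym2 (Fin n) // ¬ e.IsDiag}

instance (n : ℕ) : MeasurableSpace (Finset (EdgeType n)) := ⊤

/-- The degree of vertex `i` in the graph with edge set `g`. -/
def edeg (n : ℕ) (g : Finset (EdgeType n)) (i : Fin n) : ℕ :=
  (g.filter fun e => i ∈ e.1).card

/-- The set of (edge sets of) `d`-regular graphs on `[n]`. -/
def RegSet (n d : ℕ) : Set (Finset (EdgeType n)) :=
  {g | ∀ i, edeg n g i = d}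

instance (n : ℕ) : MeasurableSingletonClass (Finset (EdgeType n)) := ⟨fun _ => trivial⟩

lemma meas_all {n : ℕ} (s : Set (Finset (EdgeType n))) : MeasurableSet s := trivial
lemma meas_fun {n : ℕ} {β : Type*} [MeasurableSpace β] (f : Finset (EdgeType n) → β) :
    Measurable f := fun _ _ => trivial

lemma edeg_union {n : ℕ} {H F : Finset (EdgeType n)} (h : Disjoint H F) (i : Fin n) :
    edeg n (H ∪ F) i = edeg n H i + edeg n F i := by
  unfold edeg
  rw [Finset.filter_union, Finset.card_union_of_disjoint (Finset.disjoint_filter_filter h)]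

lemma edeg_sdiff {n : ℕ} {H G : Finset (EdgeType n)} (h : H ⊆ G) (i : Fin n) :
    edeg n (G \ H) i = edeg n G i - edeg n H i := by
  unfold edeg
  have : (G \ H).filter (fun e => i ∈ e.1) = G.filter (fun e => i ∈ e.1) \ H.filter (fun e => i ∈ e.1) := by
    ext e; simp only [Finset.mem_filter, Finset.mem_sdiff]; tauto
  rw [this, Finset.card_sdiff_of_subset (Finset.filter_subset_filter _ h)]

lemma edeg_le {n : ℕ} {H G : Finset (EdgeType n)} (h : H ⊆ G) (i : Fin n) :
    edeg n H i ≤ edeg n G i :=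
  Finset.card_le_card (Finset.filter_subset_filter _ h)

lemma sum_mem_edge {n : ℕ} (e : EdgeType n) :
    (∑ i : Fin n, if i ∈ e.1 then 1 else 0) = 2 := by
  obtain ⟨e, he⟩ := e
  induction e with
  | _ a b =>
    have hab : a ≠ b := by simpa using he
    have : (Finset.univ.filter (fun i => i ∈ s(a, b))) = {a, b} := by
      ext i; simp [Sym2.mem_iff]
    calc (∑ i : Fin n, if i ∈ s(a, b) then 1 else 0)
        = (Finset.univ.filter (fun i => i ∈ s(a, b))).card := (Finset.card_filter _ _).symm
      _ = 2 := by rw [this]; exact Finset.card_pair hab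

lemma two_mul_card {n d : ℕ} {G : Finset (EdgeType n)} (hG : G ∈ RegSet n d) :
    2 * G.card = d * n := by
  have key : ∑ i : Fin n, edeg n G i = 2 * G.card := by
    unfold edeg
    simp_rw [Finset.card_filter]
    rw [Finset.sum_comm]
    rw [Finset.sum_congr rfl (fun e _ => sum_mem_edge e), Finset.sum_const, smul_eq_mul, mul_comm]
  have h2 : ∑ i : Fin n, edeg n G i = n * d := by
    rw [Finset.sum_congr rfl (fun i _ => hG i), Finset.sum_const, smul_eq_mul,
      Finset.card_univ, Fintype.card_fin]
  rw [← key, h2]; exact Nat.mul_comm n d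

/-- The factor set. -/
def Fac (n d : ℕ) (H : Finset (EdgeType n)) : Set (Finset (EdgeType n)) :=
  {F | F ⊆ Finset.univ \ H ∧ ∀ i, edeg n F i = d - edeg n H i}

lemma mem_fac_iff {n d : ℕ} {H F : Finset (EdgeType n)} (hH : ∀ i, edeg n H i ≤ d) :
    F ∈ Fac n d H ↔ Disjoint H F ∧ H ∪ F ∈ RegSet n d := by
  have hsub : F ⊆ Finset.univ \ H ↔ Disjoint F H := by
    rw [Finset.subset_sdiff]
    simp [Finset.subset_univ]
  constructor
  · rintro ⟨h1, h2⟩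
    have hd : Disjoint H F := (hsub.1 h1).symm
    refine ⟨hd, fun i => ?_⟩
    rw [edeg_union hd, h2 i]
    have := hH i
    omega
  · rintro ⟨hd, h2⟩
    refine ⟨hsub.2 hd.symm, fun i => ?_⟩
    have := h2 i
    rw [edeg_union hd] at this
    omega

lemma fac_eq_image {n d : ℕ} {H : Finset (EdgeType n)} (hH : ∀ i, edeg n H i ≤ d) :
    Fac n d H = (fun G => G \ H) '' {G | G ∈ RegSet n d ∧ H ⊆ G} := by
  ext F
  rw [mem_fac_iff hH]
  constructor
  · rintro ⟨hd, hreg⟩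
    exact ⟨H ∪ F, ⟨hreg, Finset.subset_union_left⟩, Finset.union_sdiff_cancel_left hd⟩
  · rintro ⟨G, ⟨hG, hHG⟩, rfl⟩
    refine ⟨Finset.disjoint_sdiff, ?_⟩
    rwa [Finset.union_sdiff_of_subset hHG]

lemma sdiff_injOn {n d : ℕ} {H : Finset (EdgeType n)} :
    Set.InjOn (fun G => G \ H) {G | G ∈ RegSet n d ∧ H ⊆ G} := by
  rintro G1 ⟨_, h1⟩ G2 ⟨_, h2⟩ h
  simp only at h
  rw [← Finset.union_sdiff_of_subset h1, ← Finset.union_sdiff_of_subset h2, h]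

lemma count_eq_ncard {α : Type*} [MeasurableSpace α] [MeasurableSingletonClass α] {s : Set α}
    (hs : s.Finite) : Measure.count s = (s.ncard : ℝ≥0∞) := by
  rw [Measure.count_apply_finite _ hs, Set.ncard_eq_toFinset_card _ hs]

lemma uniformOn_singleton_mem {α : Type*} [MeasurableSpace α] [MeasurableSingletonClass α]
    {s : Set α} {x : α} (hs : MeasurableSet s) (hx : x ∈ s) :
    uniformOn s {x} = (Measure.count s)⁻¹ := by
  rw [uniformOn, cond_apply hs]
  have : s ∩ {x} = {x} := by
    ext y; simp only [Set.mem_inter_iff, Set.mem_singleton_iff, and_iff_right_iff_imp]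
    rintro rfl; exact hx
  rw [this, Measure.count_singleton, mul_one]

lemma uniformOn_singleton_not_mem {α : Type*} [MeasurableSpace α] [MeasurableSingletonClass α]
    {s : Set α} {x : α} (hs : MeasurableSet s) (hx : x ∉ s) :
    uniformOn s {x} = 0 := by
  rw [uniformOn, cond_apply hs]
  have : s ∩ {x} = ∅ := by
    ext y; simp only [Set.mem_inter_iff, Set.mem_singleton_iff, Set.mem_empty_iff_false,
      iff_false, not_and]
    rintro hy rfl; exact hx hy
  rw [this, measure_empty, mul_zero]

lemma bind_singleton {α : Type*} [Fintype α] [MeasurableSpace α] [MeasurableSingletonClass α]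
    (μ : Measure α) (f : α → Measure α) (hf : Measurable f) (x : α) :
    (μ.bind f) {x} = ∑ a, f a {x} * μ {a} := by
  rw [Measure.bind_apply (measurableSet_singleton x) hf.aemeasurable, lintegral_fintype]

open Classical in
lemma fac_inter {n d : ℕ} {H G : Finset (EdgeType n)} (hH : ∀ i, edeg n H i ≤ d) :
    Fac n d H ∩ (fun F => H ∪ F) ⁻¹' {G}
      = if G ∈ RegSet n d ∧ H ⊆ G then {G \ H} else ∅ := by
  split_ifs with h
  · obtain ⟨hGreg, hHG⟩ := h
    ext F
    simp only [Set.mem_inter_iff, Set.mem_preimage, Set.mem_singleton_iff, mem_fac_iff hH]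
    constructor
    · rintro ⟨⟨hd, _⟩, rfl⟩
      rw [Finset.union_sdiff_cancel_left hd]
    · rintro rfl
      exact ⟨⟨Finset.disjoint_sdiff, by rwa [Finset.union_sdiff_of_subset hHG]⟩,
        Finset.union_sdiff_of_subset hHG⟩
  · ext F
    simp only [Set.mem_inter_iff, Set.mem_preimage, Set.mem_singleton_iff,
      Set.mem_empty_iff_false, iff_false, not_and, mem_fac_iff hH]
    rintro ⟨_, hreg⟩ rfl
    exact h ⟨hreg, Finset.subset_union_left⟩

lemma count_fac {n d : ℕ} {H : Finset (EdgeType n)} (hH : ∀ i, edeg n H i ≤ d) :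
    Measure.count (Fac n d H) = Measure.count {G' | G' ∈ RegSet n d ∧ H ⊆ G'} := by
  rw [count_eq_ncard (Set.toFinite _), count_eq_ncard (Set.toFinite _), fac_eq_image hH,
    Set.ncard_image_of_injOn sdiff_injOn]

open Classical in
lemma map_fac_singleton {n d : ℕ} {H G : Finset (EdgeType n)} (hH : ∀ i, edeg n H i ≤ d) :
    ((uniformOn (Fac n d H)).map fun F => H ∪ F) {G}
      = if G ∈ RegSet n d ∧ H ⊆ G
          then (Measure.count {G' | G' ∈ RegSet n d ∧ H ⊆ G'})⁻¹ else 0 := by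
  rw [Measure.map_apply (meas_fun _) (measurableSet_singleton G), uniformOn,
    cond_apply (meas_all _), fac_inter hH]
  split_ifs with h
  · rw [Measure.count_singleton, mul_one, count_fac hH]
  · rw [measure_empty, mul_zero]

lemma count_eq_card_filter {α : Type*} [Fintype α] [MeasurableSpace α]
    [MeasurableSingletonClass α] (s : Set α) [DecidablePred (· ∈ s)] :
    Measure.count s = ((Finset.univ.filter (· ∈ s)).card : ℝ≥0∞) := by
  rw [count_eq_ncard (Set.toFinite _)]
  congr 1
  rw [← Set.ncard_coe_finset]
  congr 1
  ext x; simp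

lemma count_sub {n d m : ℕ} {G' : Finset (EdgeType n)} (hG' : G' ∈ RegSet n d) :
    Measure.count {H : Finset (EdgeType n) | H ⊆ G' ∧ H.card = m}
      = (Nat.choose (d * n / 2) m : ℝ≥0∞) := by
  have hset : {H : Finset (EdgeType n) | H ⊆ G' ∧ H.card = m} = ↑(G'.powersetCard m) := by
    ext H; simp [Finset.mem_powersetCard]
  rw [count_eq_ncard (Set.toFinite _), hset, Set.ncard_coe_finset, Finset.card_powersetCard]
  have := two_mul_card hG'
  congr 2
  omega

open Classical in
lemma map_fac_singleton' {n d : ℕ} {H G : Finset (EdgeType n)}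
    (hH : ∀ i, edeg n H i ≤ d) :
    ((uniformOn {F : Finset (EdgeType n) |
        F ⊆ Finset.univ \ H ∧ ∀ i, edeg n F i = d - edeg n H i}).map fun F => H ∪ F) {G}
      = if G ∈ RegSet n d ∧ H ⊆ G
          then (Measure.count {G' | G' ∈ RegSet n d ∧ H ⊆ G'})⁻¹ else 0 :=
  map_fac_singleton hH


/-- Sample a uniformly random `d`-regular graph `G'`, keep a uniformly random set `H` of `m` of
its edges, and then take a uniformly random `t`-factor of `K_n - H` where `t i = d - deg_H(i)`;
the union of `H` with this factor is a uniformly random `d`-regular graph. -/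
theorem completion_uniform (n d m : ℕ) (hm : m ≤ d * n / 2) (hne : (RegSet n d).Nonempty) :
    ((uniformOn (RegSet n d)).bind fun G' =>
      (uniformOn {H : Finset (EdgeType n) | H ⊆ G' ∧ H.card = m}).bind fun H =>
        (uniformOn {F : Finset (EdgeType n) |
            F ⊆ Finset.univ \ H ∧ ∀ i, edeg n F i = d - edeg n H i}).map
          fun F => H ∪ F)
      = uniformOn (RegSet n d) := by
  classical
  set R := RegSet n d with hRdef
  set r := Measure.count R with hrdef
  set c : ℝ≥0∞ := (Nat.choose (d * n / 2) m : ℝ≥0∞) with hcdef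
  set N : Finset (EdgeType n) → ℝ≥0∞ :=
    fun H => Measure.count {G' | G' ∈ R ∧ H ⊆ G'} with hNdef
  refine Measure.ext_of_singleton fun G => ?_
  rw [bind_singleton _ _ (meas_fun _) G]
  have main : ∀ G' : Finset (EdgeType n),
      ((uniformOn {H : Finset (EdgeType n) | H ⊆ G' ∧ H.card = m}).bind fun H =>
        (uniformOn {F : Finset (EdgeType n) |
            F ⊆ Finset.univ \ H ∧ ∀ i, edeg n F i = d - edeg n H i}).map
          fun F => H ∪ F) {G} * uniformOn R {G'}
      = ∑ H : Finset (EdgeType n),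
          if (G' ∈ R ∧ H ⊆ G' ∧ H.card = m) ∧ G ∈ R ∧ H ⊆ G
            then (N H)⁻¹ * (c⁻¹ * r⁻¹) else 0 := by
    intro G'
    by_cases hG' : G' ∈ R
    · rw [uniformOn_singleton_mem (meas_all _) hG',
        bind_singleton _ _ (meas_fun _) G, Finset.sum_mul]
      refine Finset.sum_congr rfl fun H _ => ?_
      by_cases hH : H ∈ {H : Finset (EdgeType n) | H ⊆ G' ∧ H.card = m}
      · have hHle : ∀ i, edeg n H i ≤ d :=
          fun i => le_of_le_of_eq (edeg_le hH.1 i) (hG' i)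
        rw [uniformOn_singleton_mem (meas_all _) hH, map_fac_singleton' hHle,
          count_sub hG', ← hcdef]
        by_cases hcond : G ∈ R ∧ H ⊆ G
        · rw [if_pos hcond, if_pos ⟨⟨hG', hH.1, hH.2⟩, hcond⟩, mul_assoc]
        · rw [if_neg hcond, if_neg (by tauto), zero_mul, zero_mul]
      · rw [uniformOn_singleton_not_mem (meas_all _) hH, mul_zero, zero_mul,
          if_neg (by tauto)]
    · rw [uniformOn_singleton_not_mem (meas_all _) hG', mul_zero,
        Finset.sum_congr rfl fun H _ => if_neg (by tauto), Finset.sum_const,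
        smul_zero]
  rw [Finset.sum_congr rfl fun G' _ => main G']
  by_cases hG : G ∈ R
  · rw [uniformOn_singleton_mem (meas_all _) hG, Finset.sum_comm]
    have hN0 : ∀ H : Finset (EdgeType n), H ⊆ G → N H ≠ 0 := by
      intro H hHG
      rw [hNdef]
      exact Measure.count_ne_zero_iff.2 ⟨G, hG, hHG⟩
    have hNtop : ∀ H : Finset (EdgeType n), N H ≠ ⊤ := by
      intro H
      have h : N H = Measure.count {G' | G' ∈ R ∧ H ⊆ G'} := rfl
      rw [h, count_eq_ncard (Set.toFinite _)]
      exact natCast_ne_top _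
    have inner : ∀ H : Finset (EdgeType n),
        (∑ G' : Finset (EdgeType n),
          if (G' ∈ R ∧ H ⊆ G' ∧ H.card = m) ∧ G ∈ R ∧ H ⊆ G
            then (N H)⁻¹ * (c⁻¹ * r⁻¹) else 0)
        = if H ⊆ G ∧ H.card = m then c⁻¹ * r⁻¹ else 0 := by
      intro H
      by_cases hcond : H ⊆ G ∧ H.card = m
      · have hiff : ∀ G' : Finset (EdgeType n),
            ((G' ∈ R ∧ H ⊆ G' ∧ H.card = m) ∧ G ∈ R ∧ H ⊆ G)
              ↔ G' ∈ {G' : Finset (EdgeType n) | G' ∈ R ∧ H ⊆ G'} := by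
          intro G'
          simp only [Set.mem_setOf_eq]
          tauto
        rw [Finset.sum_congr rfl fun G' _ => if_congr (hiff G') rfl rfl,
          ← Finset.sum_filter, Finset.sum_const, nsmul_eq_mul,
          ← count_eq_card_filter, ← mul_assoc,
          ENNReal.mul_inv_cancel (hN0 H hcond.1) (hNtop H), one_mul, if_pos hcond]
      · rw [if_neg hcond]
        exact Finset.sum_eq_zero fun G' _ => if_neg (by tauto)
    rw [Finset.sum_congr rfl fun H _ => inner H, ← Finset.sum_filter,
      Finset.sum_const, nsmul_eq_mul]
    have hfil : (Finset.univ.filter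
        (fun H : Finset (EdgeType n) => H ⊆ G ∧ H.card = m)).card
        = Nat.choose (d * n / 2) m := by
      have hset : Finset.univ.filter
          (fun H : Finset (EdgeType n) => H ⊆ G ∧ H.card = m) = G.powersetCard m := by
        ext H; simp [Finset.mem_powersetCard]
      rw [hset, Finset.card_powersetCard]
      have := two_mul_card hG
      congr 1
      omega
    have hc0 : c ≠ 0 := by
      rw [hcdef]
      exact_mod_cast Nat.cast_ne_zero.2 (Nat.choose_pos hm).ne'
    rw [hfil, ← hcdef, ← mul_assoc, ENNReal.mul_inv_cancel hc0 (by rw [hcdef]; exact natCast_ne_top _), one_mul]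
  · rw [uniformOn_singleton_not_mem (meas_all _) hG]
    exact Finset.sum_eq_zero fun G' _ =>
      Finset.sum_eq_zero fun H _ => if_neg (by tauto)
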